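/- Let n ≥ 1 and let d, d' be positive divisors of n. There exists a quandle automorphism f of the dihedral quandle Z_n^dih with f(0) = 0 and f(d mod n) = d' mod n if and only if d = d'; equivalently, the pairs (0, d) and (0, d') in (Z/nZ)² lie in the same orbit under the componentwise action of the automorphism group of Z_n^dih if and only if d = d'. -/
import Mathlib


/-- A quandle endomorphism of the dihedral quandle `Z_n^dih`. -/
def IsDihedralEnd (n : ℕ) (f : ZMod n → ZMod n) : Prop :=
  ∀ x y : ZMod n, f (2 * y - x) = 2 * f y - f x

/-- A quandle automorphism of the dihedral quandle `Z_n^dih`. -/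
def IsDihedralAut (n : ℕ) (f : ZMod n → ZMod n) : Prop :=
  IsDihedralEnd n f ∧ Function.Bijective f

theorem same_orbit_iff_eq_divisor (n : ℕ) (hn : 1 ≤ n) (d d' : ℕ)
    (hd : 0 < d) (hd' : 0 < d') (hdn : d ∣ n) (hd'n : d' ∣ n) :
    (∃ f : ZMod n → ZMod n, IsDihedralAut n f ∧
        f 0 = 0 ∧ f (d : ZMod n) = (d' : ZMod n)) ↔ d = d' := by
  have hn0 : NeZero n := ⟨by omega⟩
  constructor
  · rintro ⟨f, ⟨hE, hinj, -⟩, hf0, hfd⟩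
    have hneg : ∀ x, f (-x) = -f x := by
      intro x
      have := hE x 0
      simpa [hf0] using this
    have hadd : ∀ x y, f (x + 2 * y) = f x + 2 * f y := by
      intro x y
      have := hE (-x) y
      rw [hneg] at this
      rw [show 2 * y - -x = x + 2 * y by ring] at this
      rw [this]; ring
    have key : ∀ m : ℕ, ∀ x : ZMod n, f ((m : ZMod n) * x) = (m : ZMod n) * f x := by
      have H : ∀ m : ℕ, (∀ x : ZMod n, f ((m : ZMod n) * x) = (m : ZMod n) * f x) ∧
          (∀ x : ZMod n, f (((m + 1 : ℕ) : ZMod n) * x) = ((m + 1 : ℕ) : ZMod n) * f x) := by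
        intro m
        induction m with
        | zero => constructor <;> intro x <;> simp [hf0]
        | succ k ih =>
          refine ⟨ih.2, fun x => ?_⟩
          have h1 : ((k + 2 : ℕ) : ZMod n) * x = (k : ZMod n) * x + 2 * x := by
            push_cast; ring
          have h2 := hadd ((k : ZMod n) * x) x
          rw [h1, h2, ih.1 x]
          push_cast; ring
      exact fun m => (H m).1
    have main : ∀ a b : ℕ, 0 < a → a ∣ n →
        (((n / a : ℕ) : ZMod n) * (b : ZMod n) = 0) → a ∣ b := by
      intro a b ha han h0
      have hna : (n / a) * b * a = n * b := by
        rw [mul_comm (n / a) b, mul_assoc, Nat.div_mul_cancel han, mul_comm]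
      have : n ∣ (n / a) * b := by
        rw [← ZMod.natCast_eq_zero_iff]
        push_cast
        exact h0
      have hnd : (n / a) * a ∣ (n / a) * b := by
        rwa [Nat.div_mul_cancel han]
      have hpos : 0 < n / a := Nat.div_pos (Nat.le_of_dvd (by omega) han) ha
      exact (mul_dvd_mul_iff_left (by omega : (n / a : ℕ) ≠ 0)).mp hnd
    -- d ∣ d'
    have hdd' : d ∣ d' := by
      apply main d d' hd hdn
      have h1 : f (((n / d : ℕ) : ZMod n) * (d : ZMod n)) = ((n / d : ℕ) : ZMod n) * (d' : ZMod n) := by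
        rw [key, hfd]
      have h2 : ((n / d : ℕ) : ZMod n) * (d : ZMod n) = 0 := by
        rw [← Nat.cast_mul, Nat.div_mul_cancel hdn, ZMod.natCast_self]
      rw [h2, hf0] at h1
      exact h1.symm
    have hd'd : d' ∣ d := by
      apply main d' d hd' hd'n
      have h2 : ((n / d' : ℕ) : ZMod n) * (d' : ZMod n) = 0 := by
        rw [← Nat.cast_mul, Nat.div_mul_cancel hd'n, ZMod.natCast_self]
      have h1 : f (((n / d' : ℕ) : ZMod n) * (d : ZMod n)) = 0 := by
        rw [key, hfd, h2]
      have := hinj (by rw [h1, hf0] : f (((n / d' : ℕ) : ZMod n) * (d : ZMod n)) = f 0)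
      exact this
    exact Nat.dvd_antisymm hdd' hd'd
  · rintro rfl
    exact ⟨id, ⟨fun x y => rfl, Function.bijective_id⟩, rfl, rfl⟩
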